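/- Let G be a planar domain with holes and let Q : cl(G) → M₃(ℝ) be continuous with Q(x) ∈ 𝒬 for all x ∈ cl(G). Then there exists ν > 0 with the following property: whenever x̄ ∈ cl(G), −∞ < t₁ < t₂ < ∞, f_j (j ∈ ℕ) and f are continuous maps from [t₁,t₂] to cl(G) whose images are contained in the open ball B(x̄,ν), f_j(t₂) → f(t₂) as j → ∞, and n_j, n : [t₁,t₂] → 𝕊² are continuous maps satisfying P(n_j(t)) = Q(f_j(t)) and P(n(t)) = Q(f(t)) for all t ∈ [t₁,t₂] and |n_j(t₁) − n(t₁)| < 1 for all j, then n_j(t₂) → n(t₂) as j → ∞. -/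

import Mathlib

/-- `P(n) = s (n⊗n − (1/3) Id)`. -/
noncomputable def Pmat (s : ℝ) (n : Fin 3 → ℝ) : Matrix (Fin 3) (Fin 3) ℝ :=
  s • (Matrix.vecMulVec n n - (1 / 3 : ℝ) • (1 : Matrix (Fin 3) (Fin 3) ℝ))

/-- A Jordan curve in the plane: the image of an injective continuous map from the
unit circle `𝕊¹`. -/
def IsJordanCurve (C : Set (EuclideanSpace ℝ (Fin 2))) : Prop :=
  ∃ f : Metric.sphere (0 : EuclideanSpace ℝ (Fin 2)) 1 → EuclideanSpace ℝ (Fin 2),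
    Continuous f ∧ Function.Injective f ∧ Set.range f = C

open scoped RealInnerProductSpace

/-- Inner product on `EuclideanSpace ℝ (Fin 3)` as a sum. -/
lemma stmt11_inner_sum (m n : EuclideanSpace ℝ (Fin 3)) : ⟪m, n⟫ = ∑ i, m i * n i := by
  simp [PiLp.inner_apply, RCLike.inner_apply, conj_trivial]
  exact Finset.sum_congr rfl fun i _ => mul_comm _ _

/-- The entries of a unit-vector lift are determined by the `P`-matrix. -/
lemma stmt11_entry (s : ℝ) (hs : s ≠ 0) (m : EuclideanSpace ℝ (Fin 3))
    (M : Matrix (Fin 3) (Fin 3) ℝ) (h : Pmat s (fun i => m i) = M) (i j : Fin 3) :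
    m i * m j = M i j / s + (if i = j then (1:ℝ)/3 else 0) := by
  have h2 := congrFun (congrFun h.symm i) j
  simp [Pmat, Matrix.vecMulVec_apply, Matrix.one_apply, Matrix.smul_apply,
    Matrix.sub_apply] at h2
  by_cases hij : i = j <;> simp [hij] at h2 ⊢ <;> field_simp [h2] <;> rw [h2] <;> ring

lemma stmt11_sum_sq (m : EuclideanSpace ℝ (Fin 3)) (hm : ‖m‖ = 1) :
    ∑ i, m i * m i = 1 := by
  have h := real_inner_self_eq_norm_sq m
  rw [hm] at h
  rw [stmt11_inner_sum] at h
  linarith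

lemma stmt11_psi_eq (m n : Fin 3 → ℝ) (R1 R2 : Fin 3 → Fin 3 → ℝ)
    (hm : ∀ i j, m i * m j = R1 i j) (hn : ∀ i j, n i * n j = R2 i j) :
    ∑ i, ∑ j, R1 i j * R2 i j = (∑ i, m i * n i)^2 := by
  rw [sq, Finset.sum_mul_sum]
  refine Finset.sum_congr rfl fun i _ => Finset.sum_congr rfl fun j _ => ?_
  rw [← hm i j, ← hn i j]; ring

/-- for a continuous `𝒬`-valued field `Q` on the closure of a planar
domain with holes `G`, there is a `ν > 0` such that liftings along paths contained in a
ball of radius `ν` which start close together (distance `< 1` at `t₁`) converge at `t₂`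
whenever the underlying paths converge at `t₂`. -/
theorem stmt11 (s : ℝ) (hs : s ≠ 0) (hs' : s ∈ Set.Icc (-(1 / 2) : ℝ) 1)
    (Ω : Set (EuclideanSpace ℝ (Fin 2)))
    (hopen : IsOpen Ω) (hconn : IsConnected Ω) (hbdd : Bornology.IsBounded Ω)
    (hJordan : IsJordanCurve (frontier Ω))
    (N : ℕ) (ω : Fin N → Set (EuclideanSpace ℝ (Fin 2)))
    (hωopen : ∀ i, IsOpen (ω i)) (hωconn : ∀ i, IsConnected (ω i))
    (hωbdd : ∀ i, Bornology.IsBounded (ω i))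
    (hωJordan : ∀ i, IsJordanCurve (frontier (ω i)))
    (hsub : ∀ i, closure (ω i) ⊆ Ω)
    (hdisj : ∀ i j, i ≠ j → closure (ω i) ∩ closure (ω j) = ∅)
    (G : Set (EuclideanSpace ℝ (Fin 2))) (hG : G = Ω \ ⋃ i, closure (ω i))
    (Q : EuclideanSpace ℝ (Fin 2) → Matrix (Fin 3) (Fin 3) ℝ)
    (hQc : ContinuousOn Q (closure G))
    (hQval : ∀ x ∈ closure G, ∃ m : EuclideanSpace ℝ (Fin 3), ‖m‖ = 1 ∧
      Q x = Pmat s (fun i => m i)) :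
    ∃ ν : ℝ, 0 < ν ∧
      ∀ xbar ∈ closure G, ∀ t₁ t₂ : ℝ, t₁ < t₂ →
      ∀ (f : ℕ → ℝ → EuclideanSpace ℝ (Fin 2)) (f₀ : ℝ → EuclideanSpace ℝ (Fin 2)),
        (∀ j, ContinuousOn (f j) (Set.Icc t₁ t₂)) →
        ContinuousOn f₀ (Set.Icc t₁ t₂) →
        (∀ j, ∀ t ∈ Set.Icc t₁ t₂, f j t ∈ closure G ∧ f j t ∈ Metric.ball xbar ν) →
        (∀ t ∈ Set.Icc t₁ t₂, f₀ t ∈ closure G ∧ f₀ t ∈ Metric.ball xbar ν) →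
        Filter.Tendsto (fun j => f j t₂) Filter.atTop (nhds (f₀ t₂)) →
      ∀ (n : ℕ → ℝ → EuclideanSpace ℝ (Fin 3)) (n₀ : ℝ → EuclideanSpace ℝ (Fin 3)),
        (∀ j, ContinuousOn (n j) (Set.Icc t₁ t₂)) →
        ContinuousOn n₀ (Set.Icc t₁ t₂) →
        (∀ j, ∀ t ∈ Set.Icc t₁ t₂, ‖n j t‖ = 1 ∧ Pmat s (fun i => n j t i) = Q (f j t)) →
        (∀ t ∈ Set.Icc t₁ t₂, ‖n₀ t‖ = 1 ∧ Pmat s (fun i => n₀ t i) = Q (f₀ t)) →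
        (∀ j, ‖n j t₁ - n₀ t₁‖ < 1) →
        Filter.Tendsto (fun j => n j t₂) Filter.atTop (nhds (n₀ t₂)) := by
  classical
  set K := closure G with hK
  -- `K` is compact
  have hGbdd : Bornology.IsBounded G := hbdd.subset (by rw [hG]; exact Set.diff_subset)
  have hKcomp : IsCompact K := hGbdd.isCompact_closure
  -- the auxiliary continuous function ψ
  set ψ : EuclideanSpace ℝ (Fin 2) × EuclideanSpace ℝ (Fin 2) → ℝ :=
    fun p => ∑ i, ∑ j, (Q p.1 i j / s + (if i = j then (1:ℝ)/3 else 0)) *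
        (Q p.2 i j / s + (if i = j then (1:ℝ)/3 else 0)) with hψdef
  have h1 : ∀ i j : Fin 3, ContinuousOn (fun x => Q x i j) K := fun i j =>
    (continuous_apply_apply i j).comp_continuousOn hQc
  have hψc : ContinuousOn ψ (K ×ˢ K) := by
    apply continuousOn_finset_sum; intro i _
    apply continuousOn_finset_sum; intro j _
    apply ContinuousOn.mul
    · exact (((h1 i j).comp continuousOn_fst fun p hp => hp.1).div_const s).add
        continuousOn_const
    · exact (((h1 i j).comp continuousOn_snd fun p hp => hp.2).div_const s).add
        continuousOn_const
  -- key algebraic identity: ψ(x,y) = ⟪m,n⟫² for lifts m,n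
  have hψval : ∀ x ∈ K, ∀ y ∈ K, ∀ m n : EuclideanSpace ℝ (Fin 3),
      ‖m‖ = 1 → ‖n‖ = 1 → Pmat s (fun i => m i) = Q x → Pmat s (fun i => n i) = Q y →
      ψ (x, y) = ⟪m, n⟫ ^ 2 := by
    intro x hx y hy m n hm hn hPm hPn
    rw [stmt11_inner_sum]
    exact stmt11_psi_eq (fun i => m i) (fun i => n i) _ _
      (stmt11_entry s hs m (Q x) hPm) (stmt11_entry s hs n (Q y) hPn)
  have hψdiag : ∀ y ∈ K, ψ (y, y) = 1 := by
    intro y hy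
    obtain ⟨m, hm, hPm⟩ := hQval y hy
    rw [hψval y hy y hy m m hm hm hPm.symm hPm.symm, stmt11_inner_sum, stmt11_sum_sq m hm]
    norm_num
  -- uniform continuity gives δ
  have huc := (hKcomp.prod hKcomp).uniformContinuousOn_of_continuous hψc
  rw [Metric.uniformContinuousOn_iff] at huc
  obtain ⟨δ, hδ, hδ'⟩ := huc (1/2) (by norm_num)
  refine ⟨δ/2, by linarith, ?_⟩
  intro xbar hxbar t₁ t₂ ht f f₀ hfc hf₀c hfmem hf₀mem hft n n₀ hnc hn₀c hnP hn₀P hinit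
  -- ψ > 1/2 on all relevant pairs
  have hψbig : ∀ x ∈ K, ∀ y ∈ K, x ∈ Metric.ball xbar (δ/2) → y ∈ Metric.ball xbar (δ/2) →
      ψ (x, y) > 1/2 := by
    intro x hx y hy hxb hyb
    have hdxy : dist x y < δ := by
      have := dist_triangle x xbar y
      rw [Metric.mem_ball] at hxb hyb
      rw [dist_comm xbar y] at this
      linarith
    have hd : dist ((x, y) : _ × _) (y, y) < δ := by
      rw [Prod.dist_eq]; simp [hdxy, hδ]
    have := hδ' (x, y) ⟨hx, hy⟩ (y, y) ⟨hy, hy⟩ hd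
    rw [hψdiag y hy, Real.dist_eq] at this
    have := abs_lt.mp this
    linarith [this.1]
  -- the inner product of the two lifts, as a function of t
  set D : ℕ → ℝ → ℝ := fun j t => ⟪n j t, n₀ t⟫ with hDdef
  have hDc : ∀ j, ContinuousOn (D j) (Set.Icc t₁ t₂) := fun j => (hnc j).inner hn₀c
  -- pointwise dichotomy
  have hDsq : ∀ j, ∀ t ∈ Set.Icc t₁ t₂, (D j t)^2 = ψ (f j t, f₀ t) := by
    intro j t htt
    obtain ⟨hn1, hP1⟩ := hnP j t htt
    obtain ⟨hn0, hP0⟩ := hn₀P t htt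
    exact (hψval (f j t) (hfmem j t htt).1 (f₀ t) (hf₀mem t htt).1 (n j t) (n₀ t)
      hn1 hn0 hP1 hP0).symm
  have hdich : ∀ j, ∀ t ∈ Set.Icc t₁ t₂, D j t > 1/2 ∨ D j t < -(1/2) := by
    intro j t htt
    have hb := hψbig (f j t) (hfmem j t htt).1 (f₀ t) (hf₀mem t htt).1
      (hfmem j t htt).2 (hf₀mem t htt).2
    rw [← hDsq j t htt] at hb
    by_contra hcon
    push_neg at hcon
    nlinarith [hcon.1, hcon.2]
  -- at t₁ the lifts are close
  have hmemt₁ : t₁ ∈ Set.Icc t₁ t₂ := ⟨le_refl _, le_of_lt ht⟩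
  have hmemt₂ : t₂ ∈ Set.Icc t₁ t₂ := ⟨le_of_lt ht, le_refl _⟩
  have hnormsq : ∀ j, ∀ t ∈ Set.Icc t₁ t₂, ‖n j t - n₀ t‖^2 = 2 - 2 * D j t := by
    intro j t htt
    have h1 := (hnP j t htt).1
    have h0 := (hn₀P t htt).1
    rw [norm_sub_sq_real, h1, h0]; ring
  have hDt₁ : ∀ j, D j t₁ > 1/2 := by
    intro j
    have h := hnormsq j t₁ hmemt₁
    have h2 := hinit j
    nlinarith [norm_nonneg (n j t₁ - n₀ t₁)]
  -- the dichotomy plus IVT: D j t > 1/2 on all of [t₁,t₂]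
  have hDall : ∀ j, ∀ t ∈ Set.Icc t₁ t₂, D j t > 1/2 := by
    intro j t htt
    by_contra hcon
    push_neg at hcon
    have hneg : D j t < -(1/2) := by
      rcases hdich j t htt with h | h
      · linarith
      · exact h
    have hsub : Set.Icc t₁ t ⊆ Set.Icc t₁ t₂ := Set.Icc_subset_Icc le_rfl htt.2
    have hivt := intermediate_value_Icc' htt.1 ((hDc j).mono hsub)
    have h0 : (0:ℝ) ∈ Set.Icc (D j t) (D j t₁) := ⟨le_of_lt (by linarith), le_of_lt (by linarith [hDt₁ j])⟩
    obtain ⟨u, hu, hDu⟩ := hivt h0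
    rcases hdich j u (hsub hu) with h | h <;> rw [hDu] at h <;> norm_num at h
  -- convergence of ψ at t₂
  have hft₂K : ∀ j, f j t₂ ∈ K := fun j => (hfmem j t₂ hmemt₂).1
  have hf₀t₂K : f₀ t₂ ∈ K := (hf₀mem t₂ hmemt₂).1
  have htendW : Filter.Tendsto (fun j => ((f j t₂, f₀ t₂) : _ × _)) Filter.atTop
      (nhdsWithin ((f₀ t₂, f₀ t₂) : _ × _) (K ×ˢ K)) := by
    apply tendsto_nhdsWithin_of_tendsto_nhds_of_eventually_within
    · exact hft.prodMk_nhds tendsto_const_nhds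
    · exact Filter.Eventually.of_forall fun j => ⟨hft₂K j, hf₀t₂K⟩
  have hψtend : Filter.Tendsto (fun j => ψ (f j t₂, f₀ t₂)) Filter.atTop (nhds 1) := by
    have hcw : ContinuousWithinAt ψ (K ×ˢ K) (f₀ t₂, f₀ t₂) :=
      hψc.continuousWithinAt ⟨hf₀t₂K, hf₀t₂K⟩
    have := hcw.tendsto.comp htendW
    rwa [hψdiag (f₀ t₂) hf₀t₂K] at this
  -- D j t₂ → 1 by squeezing
  have hDle1 : ∀ j, D j t₂ ≤ 1 := by
    intro j
    have := real_inner_le_norm (n j t₂) (n₀ t₂)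
    rw [(hnP j t₂ hmemt₂).1, (hn₀P t₂ hmemt₂).1] at this
    simpa using this
  have hDlow : ∀ j, 1 - (2/3) * (1 - (D j t₂)^2) ≤ D j t₂ := by
    intro j
    have h1 := hDall j t₂ hmemt₂
    have h2 := hDle1 j
    nlinarith
  have hDtend : Filter.Tendsto (fun j => D j t₂) Filter.atTop (nhds 1) := by
    have hlow : Filter.Tendsto (fun j => 1 - (2/3) * (1 - (D j t₂)^2)) Filter.atTop
        (nhds 1) := by
      have : Filter.Tendsto (fun j => (D j t₂)^2) Filter.atTop (nhds 1) := by
        have heq : (fun j => (D j t₂)^2) = fun j => ψ (f j t₂, f₀ t₂) := by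
          funext j; exact hDsq j t₂ hmemt₂
        rw [heq]; exact hψtend
      have h2 : Filter.Tendsto (fun j => (1:ℝ) - (2/3) * (1 - (D j t₂)^2)) Filter.atTop
          (nhds ((1:ℝ) - (2/3) * (1 - 1))) :=
        Filter.Tendsto.const_sub _ (Filter.Tendsto.const_mul _
          (Filter.Tendsto.const_sub _ this))
      simpa using h2
    exact tendsto_of_tendsto_of_tendsto_of_le_of_le hlow tendsto_const_nhds
      hDlow (fun j => hDle1 j)
  -- conclude: ‖n j t₂ - n₀ t₂‖² → 0 hence n j t₂ → n₀ t₂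
  rw [tendsto_iff_norm_sub_tendsto_zero]
  have hsq : Filter.Tendsto (fun j => ‖n j t₂ - n₀ t₂‖^2) Filter.atTop (nhds 0) := by
    have heq : (fun j => ‖n j t₂ - n₀ t₂‖^2) = fun j => 2 - 2 * D j t₂ := by
      funext j; exact hnormsq j t₂ hmemt₂
    rw [heq]
    have h2 : Filter.Tendsto (fun j => (2:ℝ) - 2 * D j t₂) Filter.atTop
        (nhds ((2:ℝ) - 2 * 1)) :=
      Filter.Tendsto.const_sub _ (Filter.Tendsto.const_mul _ hDtend)
    simpa using h2
  have := hsq.sqrt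
  rw [Real.sqrt_zero] at this
  refine this.congr fun j => ?_
  rw [Real.sqrt_sq (norm_nonneg _)]
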